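/- There exists θ > 0 (explicitly θ = 2 log 2 + ∑_{k≥1} 2^{-k} log(1 - 2^{-k})) such that log det Σ_n = θ·2^n - 2 log 2 + o(1) as n → ∞; more precisely, log det Σ_n - θ·2^n + 2 log 2 = O(n·2^{-n}). -/

import Mathlib

open Finset

/-- `log det Σ_n`, using `det Σ_n = (2^n - 1) ∏_{k=0}^{n-1} (2^{n-k} - 1)^{2^k}`. -/
noncomputable def logDetSigma (n : ℕ) : ℝ :=
  Real.log (((2 : ℝ) ^ n - 1) * ∏ k ∈ Finset.range n, ((2 : ℝ) ^ (n - k) - 1) ^ (2 ^ k))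

noncomputable def aSeq (j : ℕ) : ℝ := (1 / 2 ^ (j + 1)) * Real.log (1 - 1 / 2 ^ (j + 1))

lemma abs_log_one_sub_le {x : ℝ} (hx : 0 ≤ x) (hx2 : x ≤ 1/2) :
    |Real.log (1 - x)| ≤ 2 * x := by
  have h1 : (0:ℝ) < 1 - x := by linarith
  have hlog : Real.log (1 - x) ≤ 0 := Real.log_nonpos (by linarith) (by linarith)
  rw [abs_of_nonpos hlog]
  have h2 := Real.log_le_sub_one_of_pos (x := (1-x)⁻¹) (by positivity)
  rw [Real.log_inv] at h2
  have h3 : (1-x)⁻¹ ≤ 1 + 2*x := by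
    rw [inv_eq_one_div, div_le_iff₀ h1]; nlinarith
  linarith

lemma abs_aSeq_le (j : ℕ) : |aSeq j| ≤ 2 * (1/4 : ℝ) ^ (j + 1) := by
  have h2 : (2:ℝ) ≤ 2 ^ (j+1) := by
    calc (2:ℝ) = 2^1 := by norm_num
    _ ≤ 2^(j+1) := by apply pow_le_pow_right₀ (by norm_num); omega
  have hx : (0:ℝ) ≤ 1 / 2 ^ (j+1) := by positivity
  have hx2 : (1:ℝ) / 2 ^ (j+1) ≤ 1/2 := by
    rw [div_le_div_iff₀ (by positivity) (by norm_num)]; linarith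
  have hb := abs_log_one_sub_le hx hx2
  have heq : |aSeq j| = (1 / 2 ^ (j+1)) * |Real.log (1 - 1 / 2 ^ (j+1))| := by
    rw [aSeq, abs_mul, abs_of_nonneg hx]
  rw [heq]
  calc (1 / 2 ^ (j+1)) * |Real.log (1 - 1 / 2 ^ (j+1))|
      ≤ (1 / 2 ^ (j+1)) * (2 * (1 / 2 ^ (j+1))) := by
        apply mul_le_mul_of_nonneg_left hb hx
    _ = 2 * (1/4 : ℝ) ^ (j+1) := by
        rw [show ((1:ℝ)/4) = (1/2)*(1/2) by norm_num, mul_pow]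
        field_simp
        rw [← mul_pow, ← mul_pow]; norm_num

lemma summable_bound : Summable (fun j : ℕ => 2 * (1/4:ℝ) ^ (j+1)) := by
  have hg : Summable (fun j : ℕ => (1/4:ℝ) ^ j) :=
    summable_geometric_of_lt_one (by norm_num) (by norm_num)
  exact (hg.mul_left (2 * (1/4))).congr (fun j => by rw [pow_succ]; ring)

lemma summable_aSeq : Summable aSeq := by
  apply Summable.of_abs
  exact Summable.of_nonneg_of_le (fun _ => abs_nonneg _) abs_aSeq_le summable_bound

lemma tail_bound (n : ℕ) : |∑' j : ℕ, aSeq (j + n)| ≤ (2/3) * (1/4:ℝ) ^ n := by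
  have hs1 : Summable (fun j => |aSeq (j + n)|) :=
    (summable_aSeq.comp_injective (add_left_injective n)).abs
  have hs2 : Summable (fun j : ℕ => 2 * (1/4:ℝ) ^ (j + n + 1)) := by
    have hg : Summable (fun j : ℕ => (1/4:ℝ) ^ j) :=
      summable_geometric_of_lt_one (by norm_num) (by norm_num)
    exact (hg.mul_left (2 * (1/4)^(n+1))).congr
      (fun j => by rw [show j + n + 1 = (n+1) + j by omega, pow_add]; ring)
  calc |∑' j : ℕ, aSeq (j + n)| ≤ ∑' j : ℕ, |aSeq (j + n)| := by
        simpa using norm_tsum_le_tsum_norm (f := fun j => aSeq (j + n)) (by simpa using hs1)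
    _ ≤ ∑' j : ℕ, 2 * (1/4:ℝ) ^ (j + n + 1) :=
        Summable.tsum_le_tsum (fun j => abs_aSeq_le (j + n)) hs1 hs2
    _ = (2 * (1/4)^(n+1)) * ∑' j : ℕ, (1/4:ℝ) ^ j := by
        rw [← tsum_mul_left]
        congr 1; funext j
        rw [show j + n + 1 = (n+1) + j by omega, pow_add]; ring
    _ = (2/3) * (1/4:ℝ) ^ n := by
        rw [tsum_geometric_of_lt_one (by norm_num) (by norm_num), pow_succ]
        norm_num; ring

lemma key_sum (n : ℕ) : ∑ j ∈ range n, ((j:ℝ)+1)/2^(j+1) = 2 - ((n:ℝ)+2)/2^n := by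
  induction n with
  | zero => norm_num
  | succ n ih =>
    rw [Finset.sum_range_succ, ih]
    have h : (0:ℝ) < 2^n := by positivity
    push_cast
    field_simp
    ring

lemma log_pow_sub_one {m : ℕ} (hm : 1 ≤ m) :
    Real.log ((2:ℝ)^m - 1) = m * Real.log 2 + Real.log (1 - 1/2^m) := by
  have h2 : (2:ℝ) ≤ 2^m := by
    calc (2:ℝ) = 2^1 := by norm_num
    _ ≤ 2^m := pow_le_pow_right₀ (by norm_num) hm
  have hpos : (0:ℝ) < 1 - 1/2^m := by
    have : (1:ℝ)/2^m ≤ 1/2 := by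
      rw [div_le_div_iff₀ (by positivity) (by norm_num)]; linarith
    linarith
  have h1 : (2:ℝ)^m - 1 = 2^m * (1 - 1/2^m) := by field_simp
  rw [h1, Real.log_mul (by positivity) (ne_of_gt hpos), Real.log_pow]

lemma expand (n : ℕ) (hn : 1 ≤ n) :
    logDetSigma n = (n:ℝ) * Real.log 2 + Real.log (1 - 1/2^n)
      + 2^(n+1) * Real.log 2 - ((n:ℝ)+2) * Real.log 2
      + 2^n * ∑ j ∈ range n, aSeq j := by
  have h2n : (0:ℝ) < 2^n - 1 := by
    have : (2:ℝ) ≤ 2^n := by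
      calc (2:ℝ) = 2^1 := by norm_num
      _ ≤ 2^n := pow_le_pow_right₀ (by norm_num) hn
    linarith
  have hfacpos : ∀ k ∈ range n, (0:ℝ) < (2:ℝ)^(n-k) - 1 := by
    intro k hk
    have hk' : k < n := mem_range.1 hk
    have : (2:ℝ) ≤ 2^(n-k) := by
      calc (2:ℝ) = 2^1 := by norm_num
      _ ≤ 2^(n-k) := pow_le_pow_right₀ (by norm_num) (by omega)
    linarith
  have hfac : ∀ k ∈ range n, ((2:ℝ)^(n-k) - 1)^(2^k) ≠ 0 :=
    fun k hk => pow_ne_zero _ (ne_of_gt (hfacpos k hk))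
  have hprod : ∏ k ∈ range n, ((2:ℝ)^(n-k) - 1)^(2^k) ≠ 0 := Finset.prod_ne_zero_iff.2 hfac
  rw [logDetSigma, Real.log_mul (ne_of_gt h2n) hprod, Real.log_prod hfac,
    log_pow_sub_one hn]
  have hstep : ∑ k ∈ range n, Real.log (((2:ℝ)^(n-k) - 1)^(2^k))
      = ∑ k ∈ range n, (2:ℝ)^k * ((↑(n-k)) * Real.log 2 + Real.log (1 - 1/2^(n-k))) := by
    apply Finset.sum_congr rfl
    intro k hk
    have hk' : k < n := mem_range.1 hk
    rw [Real.log_pow, log_pow_sub_one (by omega : 1 ≤ n - k)]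
    push_cast
    ring
  rw [hstep]
  have hre : ∑ k ∈ range n, (2:ℝ)^k * ((↑(n-k)) * Real.log 2 + Real.log (1 - 1/2^(n-k)))
      = ∑ j ∈ range n, (2:ℝ)^n * ((((j:ℝ)+1)/2^(j+1)) * Real.log 2 + aSeq j) := by
    rw [← Finset.sum_range_reflect]
    apply Finset.sum_congr rfl
    intro j hj
    have hj' : j < n := mem_range.1 hj
    have h1 : n - (n-1-j) = j+1 := by omega
    rw [h1]
    have h2pos : (0:ℝ) < 2^(j+1) := by positivity
    have hpow : (2:ℝ)^(n-1-j) = 2^n / 2^(j+1) := by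
      rw [eq_div_iff (ne_of_gt h2pos), ← pow_add]
      congr 1; omega
    rw [hpow, aSeq]
    push_cast
    field_simp
  rw [hre, ← Finset.mul_sum, Finset.sum_add_distrib, ← Finset.sum_mul, key_sum]
  have hp : (0:ℝ) < 2^n := by positivity
  field_simp
  ring

theorem stmt_6 :
    ∃ θ : ℝ, 0 < θ ∧
      θ = 2 * Real.log 2 + ∑' k : ℕ, (1 / 2 ^ (k + 1) : ℝ) * Real.log (1 - 1 / 2 ^ (k + 1)) ∧
      ∃ C : ℝ, 0 < C ∧ ∀ n : ℕ, 1 ≤ n →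
        |logDetSigma n - θ * 2 ^ n + 2 * Real.log 2| ≤ C * n / 2 ^ n := by
  have hSa : (∑' k : ℕ, (1 / 2 ^ (k + 1) : ℝ) * Real.log (1 - 1 / 2 ^ (k + 1)))
      = ∑' k, aSeq k := rfl
  set S : ℝ := ∑' k, aSeq k with hSdef
  have hSbound : |S| ≤ 2/3 := by
    have := tail_bound 0
    simpa using this
  have hlog2 := Real.log_two_gt_d9
  refine ⟨2 * Real.log 2 + S, ?_, by rw [hSa], 3, by norm_num, ?_⟩
  · have h1 := abs_le.1 hSbound
    linarith
  · intro n hn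
    have hp : (0:ℝ) < 2^n := by positivity
    have hsplit := Summable.sum_add_tsum_nat_add (f := aSeq) n summable_aSeq
    set T : ℝ := ∑' j : ℕ, aSeq (j + n) with hTdef
    have hsum : ∑ j ∈ range n, aSeq j = S - T := by
      rw [hSdef, ← hsplit]; ring
    have hexp := expand n hn
    have key : logDetSigma n - (2 * Real.log 2 + S) * 2^n + 2 * Real.log 2
        = Real.log (1 - 1/2^n) - 2^n * T := by
      rw [hexp, hsum]
      ring
    rw [key]
    have h2 : (2:ℝ) ≤ 2^n := by
      calc (2:ℝ) = 2^1 := by norm_num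
      _ ≤ 2^n := pow_le_pow_right₀ (by norm_num) hn
    have hb1 : |Real.log (1 - 1/2^n)| ≤ 2 * (1/2^n) :=
      abs_log_one_sub_le (by positivity)
        (by rw [div_le_div_iff₀ hp (by norm_num)]; linarith)
    have hb2 : |2^n * T| ≤ (2/3) * (1/2^n) := by
      rw [abs_mul, abs_of_pos hp]
      calc (2:ℝ)^n * |T| ≤ 2^n * ((2/3) * (1/4:ℝ)^n) :=
            mul_le_mul_of_nonneg_left (tail_bound n) (le_of_lt hp)
        _ = (2/3) * (1/2^n) := by
            rw [show ((1:ℝ)/4) = (1/2)*(1/2) by norm_num, mul_pow,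
              show ((1:ℝ)/2)^n = 1/2^n by rw [div_pow]; norm_num]
            field_simp
    have habs : |Real.log (1 - 1/2^n) - 2^n * T| ≤ |Real.log (1 - 1/2^n)| + |2^n * T| := by
      rw [sub_eq_add_neg]
      exact (abs_add_le _ _).trans (by rw [abs_neg])
    have hn1 : (1:ℝ) ≤ n := by exact_mod_cast hn
    calc |Real.log (1 - 1/2^n) - 2^n * T| ≤ 2 * (1/2^n) + (2/3) * (1/2^n) := by
          linarith
      _ ≤ 3 * (n:ℝ) / 2^n := by
          rw [mul_one_div, mul_one_div, ← add_div, div_le_div_iff₀ hp hp]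
          nlinarith
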